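/- (One-step descent inequality.) Let β > 0, 0 < η ≤ 1, y ∈ ℝ^d, W ∈ Δ^p, and let W⋆ ∈ Δ^p satisfy 𝒜W⋆ = v. Let G = C + 𝒜ᵀy + β𝒜ᵀ(𝒜W − v), let H ∈ Δ^p be a minimizer of Z ↦ Tr(G Z) over Δ^p, and set W′ = (1 − η)W + ηH. Then L_β(W′; y) − Tr(C W⋆) ≤ (1 − η)(L_β(W; y) − Tr(C W⋆)) − (βη/2)‖𝒜W − v‖² + (βη²/2)‖𝒜‖² p². -/

import Mathlib

open scoped BigOperators

noncomputable section

/-- A binary (0/1-valued) vector. -/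
def binaryVec {ι : Type*} (x : ι → ℝ) : Prop := ∀ i, x i = 0 ∨ x i = 1

/-- `Δ^p`: the convex hull of the rank-one binary matrices `x xᵀ`, `x ∈ {0,1}^p`. -/
def CPdelta (ι : Type*) [Fintype ι] : Set (Matrix ι ι ℝ) :=
  convexHull ℝ {M | ∃ x : ι → ℝ, binaryVec x ∧ M = Matrix.vecMulVec x x}

/-- Frobenius inner product of matrices. -/
def frobInner {ι : Type*} [Fintype ι] (A B : Matrix ι ι ℝ) : ℝ := ∑ i, ∑ j, A i j * B i j

/-- Frobenius norm of a matrix. -/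
def frobNorm {ι : Type*} [Fintype ι] (A : Matrix ι ι ℝ) : ℝ :=
  Real.sqrt (∑ i, ∑ j, (A i j) ^ 2)

/-- Operator norm `‖𝒜‖ = sup {‖𝒜X‖ : ‖X‖_F ≤ 1}` of a linear map from matrices
(with the Frobenius norm) to `ℝ^d` (with the Euclidean norm). -/
def opNorm {p d : ℕ} (A : Matrix (Fin p) (Fin p) ℝ →ₗ[ℝ] EuclideanSpace ℝ (Fin d)) : ℝ :=
  sSup {r : ℝ | ∃ X : Matrix (Fin p) (Fin p) ℝ, frobNorm X ≤ 1 ∧ r = ‖A X‖}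

/-- The augmented Lagrangian `L_β(W; y) = Tr(C W) + yᵀ(𝒜W - v) + (β/2)‖𝒜W - v‖²`. -/
def Lag {p d : ℕ} (C : Matrix (Fin p) (Fin p) ℝ)
    (A : Matrix (Fin p) (Fin p) ℝ →ₗ[ℝ] EuclideanSpace ℝ (Fin d))
    (v : EuclideanSpace ℝ (Fin d)) (β : ℝ)
    (W : Matrix (Fin p) (Fin p) ℝ) (y : EuclideanSpace ℝ (Fin d)) : ℝ :=
  Matrix.trace (C * W) + (∑ i, y i * (A W - v) i) + β / 2 * ‖A W - v‖ ^ 2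

section helpers

lemma CPdelta_props {p : ℕ} {M : Matrix (Fin p) (Fin p) ℝ} (h : M ∈ CPdelta (Fin p)) :
    M.IsSymm ∧ ∀ i j, M i j ∈ Set.Icc (0:ℝ) 1 := by
  have hsub : CPdelta (Fin p) ⊆
      {M : Matrix (Fin p) (Fin p) ℝ | M.IsSymm ∧ ∀ i j, M i j ∈ Set.Icc (0:ℝ) 1} := by
    apply convexHull_min
    · rintro M ⟨x, hx, rfl⟩
      constructor
      · ext i j
        simp [Matrix.transpose_apply, Matrix.vecMulVec_apply, mul_comm]
      · intro i j
        rcases hx i with h1 | h1 <;> rcases hx j with h2 | h2 <;>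
          simp [Matrix.vecMulVec_apply, h1, h2]
    · rintro M ⟨hM1, hM2⟩ N ⟨hN1, hN2⟩ a b ha hb hab
      constructor
      · ext i j
        have h1 := hM1.apply i j
        have h2 := hN1.apply i j
        simp [Matrix.transpose_apply, Matrix.add_apply, Matrix.smul_apply, h1, h2]
      · intro i j
        have := (convex_Icc (0:ℝ) 1) (hM2 i j) (hN2 i j) ha hb hab
        simpa [Matrix.add_apply, Matrix.smul_apply, smul_eq_mul] using this
  exact hsub h

lemma frobNorm_nonneg' {p : ℕ} (X : Matrix (Fin p) (Fin p) ℝ) : 0 ≤ frobNorm X :=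
  Real.sqrt_nonneg _

lemma trace_eq_frobInner {p : ℕ} (M X : Matrix (Fin p) (Fin p) ℝ) (hX : X.IsSymm) :
    Matrix.trace (M * X) = frobInner M X := by
  unfold frobInner
  rw [Matrix.trace]
  simp only [Matrix.diag, Matrix.mul_apply]
  exact Finset.sum_congr rfl fun i _ => Finset.sum_congr rfl fun j _ => by rw [hX.apply i j]

lemma sq_sum_le_of_frobNorm_le_one {p : ℕ} {X : Matrix (Fin p) (Fin p) ℝ}
    (h : frobNorm X ≤ 1) : ∀ i j, |X i j| ≤ 1 := by
  intro i j
  have hs : (0:ℝ) ≤ ∑ i, ∑ j, (X i j)^2 :=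
    Finset.sum_nonneg fun _ _ => Finset.sum_nonneg fun _ _ => sq_nonneg _
  have h' : Real.sqrt (∑ i, ∑ j, (X i j)^2) ≤ 1 := h
  have hsum : ∑ i, ∑ j, (X i j)^2 ≤ 1 := by
    nlinarith [Real.sq_sqrt hs, Real.sqrt_nonneg (∑ i, ∑ j, (X i j)^2)]
  have h1 : (X i j)^2 ≤ ∑ j, (X i j)^2 :=
    Finset.single_le_sum (fun k _ => sq_nonneg (X i k)) (Finset.mem_univ j)
  have h2 : ∑ j, (X i j)^2 ≤ ∑ i, ∑ j, (X i j)^2 :=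
    Finset.single_le_sum (fun k _ => Finset.sum_nonneg fun l _ => sq_nonneg (X k l))
      (Finset.mem_univ i)
  have : (X i j)^2 ≤ 1 := by linarith
  rw [abs_le]
  constructor <;> nlinarith

lemma opNorm_bddAbove {p d : ℕ} (A : Matrix (Fin p) (Fin p) ℝ →ₗ[ℝ] EuclideanSpace ℝ (Fin d)) :
    BddAbove {r : ℝ | ∃ X : Matrix (Fin p) (Fin p) ℝ, frobNorm X ≤ 1 ∧ r = ‖A X‖} := by
  refine ⟨∑ i : Fin p, ∑ j : Fin p, ‖A (Matrix.single i j 1)‖, ?_⟩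
  rintro r ⟨X, hX, rfl⟩
  have hXd := sq_sum_le_of_frobNorm_le_one hX
  have hrep : A X = ∑ i : Fin p, ∑ j : Fin p, X i j • A (Matrix.single i j 1) := by
    conv_lhs => rw [Matrix.matrix_eq_sum_single X]
    rw [map_sum]
    refine Finset.sum_congr rfl fun i _ => ?_
    rw [map_sum]
    refine Finset.sum_congr rfl fun j _ => ?_
    rw [← map_smul]
    congr 1
    rw [Matrix.smul_single]
    simp
  rw [hrep]
  calc ‖∑ i : Fin p, ∑ j : Fin p, X i j • A (Matrix.single i j 1)‖
      ≤ ∑ i : Fin p, ∑ j : Fin p, ‖X i j • A (Matrix.single i j 1)‖ := by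
        exact (norm_sum_le _ _).trans (Finset.sum_le_sum fun i _ => norm_sum_le _ _)
    _ ≤ ∑ i : Fin p, ∑ j : Fin p, ‖A (Matrix.single i j 1)‖ := by
        refine Finset.sum_le_sum fun i _ => Finset.sum_le_sum fun j _ => ?_
        rw [norm_smul, Real.norm_eq_abs]
        nlinarith [hXd i j, norm_nonneg (A (Matrix.single i j 1)), abs_nonneg (X i j)]

lemma opNorm_nonneg' {p d : ℕ} (A : Matrix (Fin p) (Fin p) ℝ →ₗ[ℝ] EuclideanSpace ℝ (Fin d)) :
    0 ≤ opNorm A := by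
  have h0 : (0:ℝ) ∈ {r : ℝ | ∃ X : Matrix (Fin p) (Fin p) ℝ, frobNorm X ≤ 1 ∧ r = ‖A X‖} :=
    ⟨0, by simp [frobNorm], by simp⟩
  exact le_csSup (opNorm_bddAbove A) h0

lemma frobNorm_smul' {p : ℕ} (c : ℝ) (X : Matrix (Fin p) (Fin p) ℝ) :
    frobNorm (c • X) = |c| * frobNorm X := by
  unfold frobNorm
  have : ∑ i, ∑ j, ((c • X) i j)^2 = c^2 * ∑ i, ∑ j, (X i j)^2 := by
    simp [Matrix.smul_apply, smul_eq_mul, mul_pow, Finset.mul_sum]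
  rw [this, Real.sqrt_mul (sq_nonneg c), Real.sqrt_sq_eq_abs]

lemma norm_A_le {p d : ℕ} (A : Matrix (Fin p) (Fin p) ℝ →ₗ[ℝ] EuclideanSpace ℝ (Fin d))
    (X : Matrix (Fin p) (Fin p) ℝ) : ‖A X‖ ≤ opNorm A * frobNorm X := by
  rcases eq_or_lt_of_le (frobNorm_nonneg' X) with h0 | h0
  · have hsn : (0:ℝ) ≤ ∑ i, ∑ j, (X i j)^2 :=
      Finset.sum_nonneg fun _ _ => Finset.sum_nonneg fun _ _ => sq_nonneg _
    have hs : ∑ i, ∑ j, (X i j)^2 = 0 := by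
      have h' : Real.sqrt (∑ i, ∑ j, (X i j)^2) = 0 := h0.symm
      nlinarith [Real.sq_sqrt hsn]
    have hX0 : X = 0 := by
      ext i j
      have h1 : ∀ i ∈ Finset.univ, (0:ℝ) ≤ ∑ j, (X i j)^2 :=
        fun _ _ => Finset.sum_nonneg fun _ _ => sq_nonneg _
      have h2 := (Finset.sum_eq_zero_iff_of_nonneg h1).mp hs i (Finset.mem_univ i)
      have h3 := (Finset.sum_eq_zero_iff_of_nonneg (fun _ _ => sq_nonneg _)).mp h2 j
        (Finset.mem_univ j)
      exact pow_eq_zero_iff (by norm_num) |>.mp h3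
    rw [hX0]
    simp [frobNorm]
  · set t := frobNorm X with ht
    have h1 : frobNorm (t⁻¹ • X) ≤ 1 := by
      rw [frobNorm_smul', abs_of_pos (inv_pos.mpr h0), ← ht, inv_mul_cancel₀ (ne_of_gt h0)]
    have h2 : ‖A (t⁻¹ • X)‖ ≤ opNorm A := le_csSup (opNorm_bddAbove A) ⟨_, h1, rfl⟩
    have h3 : ‖A (t⁻¹ • X)‖ = t⁻¹ * ‖A X‖ := by
      rw [map_smul, norm_smul, Real.norm_eq_abs, abs_of_pos (inv_pos.mpr h0)]
    rw [h3] at h2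
    calc ‖A X‖ = t * (t⁻¹ * ‖A X‖) := by field_simp
    _ ≤ t * opNorm A := by nlinarith
    _ = opNorm A * t := mul_comm _ _

lemma frobNorm_le_card {p : ℕ} {X : Matrix (Fin p) (Fin p) ℝ}
    (h : ∀ i j, |X i j| ≤ 1) : frobNorm X ≤ (p : ℝ) := by
  unfold frobNorm
  have hb : ∑ i, ∑ j, (X i j)^2 ≤ (p:ℝ)^2 := by
    calc ∑ i, ∑ j, (X i j)^2 ≤ ∑ _i : Fin p, ∑ _j : Fin p, (1:ℝ) := by
          refine Finset.sum_le_sum fun i _ => Finset.sum_le_sum fun j _ => ?_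
          have := h i j
          rw [abs_le] at this
          nlinarith
      _ = (p:ℝ)^2 := by simp [sq]
  calc Real.sqrt (∑ i, ∑ j, (X i j)^2) ≤ Real.sqrt ((p:ℝ)^2) := Real.sqrt_le_sqrt hb
    _ = (p:ℝ) := Real.sqrt_sq (Nat.cast_nonneg p)

end helpers

set_option maxHeartbeats 1000000 in
/-- One-step descent inequality for the Frank-Wolfe step on the
augmented Lagrangian. -/
theorem fw_one_step_descent
    {p d : ℕ} (hp : 0 < p)
    (C : Matrix (Fin p) (Fin p) ℝ) (hC : C.IsSymm)
    (A : Matrix (Fin p) (Fin p) ℝ →ₗ[ℝ] EuclideanSpace ℝ (Fin d))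
    (Aadj : EuclideanSpace ℝ (Fin d) →ₗ[ℝ] Matrix (Fin p) (Fin p) ℝ)
    (hadj : ∀ (X : Matrix (Fin p) (Fin p) ℝ) (z : EuclideanSpace ℝ (Fin d)),
      (∑ i, A X i * z i) = frobInner (Aadj z) X)
    (v : EuclideanSpace ℝ (Fin d))
    (β : ℝ) (hβ : 0 < β) (η : ℝ) (hη0 : 0 < η) (hη1 : η ≤ 1)
    (y : EuclideanSpace ℝ (Fin d))
    (W : Matrix (Fin p) (Fin p) ℝ) (hW : W ∈ CPdelta (Fin p))
    (Wstar : Matrix (Fin p) (Fin p) ℝ) (hWstar : Wstar ∈ CPdelta (Fin p))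
    (hfeas : A Wstar = v)
    (H : Matrix (Fin p) (Fin p) ℝ) (hHmem : H ∈ CPdelta (Fin p))
    -- `H` minimizes `Z ↦ Tr(G Z)` over `Δ^p`, where `G = C + 𝒜ᵀy + β 𝒜ᵀ(𝒜W - v)`
    (hHmin : ∀ Z ∈ CPdelta (Fin p),
      Matrix.trace ((C + Aadj y + β • Aadj (A W - v)) * H) ≤
        Matrix.trace ((C + Aadj y + β • Aadj (A W - v)) * Z)) :
    Lag C A v β ((1 - η) • W + η • H) y - Matrix.trace (C * Wstar) ≤
      (1 - η) * (Lag C A v β W y - Matrix.trace (C * Wstar)) -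
        β * η / 2 * ‖A W - v‖ ^ 2 + β * η ^ 2 / 2 * opNorm A ^ 2 * (p : ℝ) ^ 2 := by
  obtain ⟨hWs, hWe⟩ := CPdelta_props hW
  obtain ⟨hHs, hHe⟩ := CPdelta_props hHmem
  obtain ⟨hSs, hSe⟩ := CPdelta_props hWstar
  -- abbreviations (plain `have` equations; all atoms written explicitly)
  -- key vector identity
  have hvec : A ((1 - η) • W + η • H) - v = (A W - v) + η • (A H - A W) := by
    rw [map_add, map_smul, map_smul]
    module
  -- trace component
  have t1 : Matrix.trace (C * ((1 - η) • W + η • H)) =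
      (1 - η) * Matrix.trace (C * W) + η * Matrix.trace (C * H) := by
    rw [Matrix.mul_add, Matrix.mul_smul, Matrix.mul_smul, Matrix.trace_add,
      Matrix.trace_smul, Matrix.trace_smul]
    simp [smul_eq_mul]
  -- linear component
  have t2 : ∑ i, y i * ((A W - v) + η • (A H - A W)) i =
      ((∑ i, A W i * y i) - ∑ i, v i * y i) +
        η * ((∑ i, A H i * y i) - ∑ i, A W i * y i) := by
    have step : ∀ i, y i * ((A W - v) + η • (A H - A W)) i =
        (A W i * y i - v i * y i) + η * (A H i * y i - A W i * y i) := by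
      intro i
      simp only [PiLp.add_apply, PiLp.smul_apply, PiLp.sub_apply, smul_eq_mul]
      ring
    rw [Finset.sum_congr rfl fun i _ => step i]
    rw [Finset.sum_add_distrib, Finset.sum_sub_distrib, ← Finset.mul_sum,
      Finset.sum_sub_distrib]
  -- inner product facts
  have hinner : ∀ u w : EuclideanSpace ℝ (Fin d), (inner ℝ u w : ℝ) = ∑ i, u i * w i := by
    intro u w
    simp [PiLp.inner_apply, RCLike.inner_apply, conj_trivial, mul_comm]
  have hnormsq : ∀ u : EuclideanSpace ℝ (Fin d), ‖u‖^2 = ∑ i, u i * u i := by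
    intro u
    rw [← real_inner_self_eq_norm_sq, hinner]
  -- norm component
  have t3 : ‖(A W - v) + η • (A H - A W)‖^2 =
      ‖A W - v‖^2 +
        2 * η * ((∑ i, A H i * (A W - v) i) - ∑ i, A W i * (A W - v) i) +
        η^2 * ‖A H - A W‖^2 := by
    rw [norm_add_sq_real, real_inner_smul_right, norm_smul, Real.norm_eq_abs, mul_pow,
      sq_abs, hinner]
    have : ∑ i, (A W - v) i * (A H - A W) i =
        (∑ i, A H i * (A W - v) i) - ∑ i, A W i * (A W - v) i := by
      rw [← Finset.sum_sub_distrib]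
      exact Finset.sum_congr rfl fun i _ => by
        simp only [PiLp.sub_apply]
        ring
    rw [this]
    ring
  -- h1 : value of Lag at the new point
  have h1 : Lag C A v β ((1 - η) • W + η • H) y =
      ((1 - η) * Matrix.trace (C * W) + η * Matrix.trace (C * H)) +
      (((∑ i, A W i * y i) - ∑ i, v i * y i) +
        η * ((∑ i, A H i * y i) - ∑ i, A W i * y i)) +
      β / 2 * (‖A W - v‖^2 +
        2 * η * ((∑ i, A H i * (A W - v) i) - ∑ i, A W i * (A W - v) i) +
        η^2 * ‖A H - A W‖^2) := by
    unfold Lag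
    rw [hvec, t1, t2, t3]
  -- h2 : value of Lag at W
  have h2 : Lag C A v β W y =
      Matrix.trace (C * W) + ((∑ i, A W i * y i) - ∑ i, v i * y i) +
        β / 2 * ‖A W - v‖^2 := by
    unfold Lag
    congr 1
    congr 1
    rw [← Finset.sum_sub_distrib]
    exact Finset.sum_congr rfl fun i _ => by
      simp only [PiLp.sub_apply]
      ring
  -- expansion of the linearized objective
  have key : ∀ Z : Matrix (Fin p) (Fin p) ℝ, Z.IsSymm →
      Matrix.trace ((C + Aadj y + β • Aadj (A W - v)) * Z) =
        Matrix.trace (C * Z) + (∑ i, A Z i * y i) +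
          β * (∑ i, A Z i * (A W - v) i) := by
    intro Z hZ
    rw [Matrix.add_mul, Matrix.add_mul, Matrix.smul_mul, Matrix.trace_add, Matrix.trace_add,
      Matrix.trace_smul, trace_eq_frobInner (Aadj y) Z hZ,
      trace_eq_frobInner (Aadj (A W - v)) Z hZ, ← hadj Z y, ← hadj Z (A W - v)]
    simp [smul_eq_mul]
  -- h3 : minimality at Wstar
  have h3 : Matrix.trace (C * H) + (∑ i, A H i * y i) +
        β * (∑ i, A H i * (A W - v) i) ≤
      Matrix.trace (C * Wstar) + (∑ i, v i * y i) +
        β * (∑ i, v i * (A W - v) i) := by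
    have := hHmin Wstar hWstar
    rw [key H hHs, key Wstar hSs, hfeas] at this
    exact this
  -- h4
  have h4 : (∑ i, A W i * (A W - v) i) - (∑ i, v i * (A W - v) i) = ‖A W - v‖^2 := by
    rw [hnormsq, ← Finset.sum_sub_distrib]
    exact Finset.sum_congr rfl fun i _ => by
      simp only [PiLp.sub_apply]
      ring
  -- h5 : curvature bound
  have h5 : ‖A H - A W‖^2 ≤ opNorm A ^ 2 * (p:ℝ)^2 := by
    have hmap : A H - A W = A (H - W) := (map_sub A H W).symm
    have hfrob : frobNorm (H - W) ≤ (p:ℝ) := by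
      apply frobNorm_le_card
      intro i j
      have e1 := hHe i j
      have e2 := hWe i j
      simp only [Set.mem_Icc] at e1 e2
      rw [Matrix.sub_apply, abs_le]
      constructor <;> linarith
    have hA := norm_A_le A (H - W)
    have h0 : (0:ℝ) ≤ ‖A (H - W)‖ := norm_nonneg _
    have e1 : ‖A (H - W)‖^2 ≤ (opNorm A)^2 * (frobNorm (H - W))^2 := by
      nlinarith [mul_self_le_mul_self h0 hA]
    have e2 : (frobNorm (H - W))^2 ≤ (p:ℝ)^2 := by
      nlinarith [frobNorm_nonneg' (H - W)]
    have e3 : (opNorm A)^2 * (frobNorm (H - W))^2 ≤ (opNorm A)^2 * (p:ℝ)^2 :=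
      mul_le_mul_of_nonneg_left e2 (sq_nonneg _)
    rw [hmap]
    linarith
  -- combine everything
  have h3η : η * (Matrix.trace (C * H) + (∑ i, A H i * y i) +
        β * (∑ i, A H i * (A W - v) i)) ≤
      η * (Matrix.trace (C * Wstar) + (∑ i, v i * y i) +
        β * (∑ i, v i * (A W - v) i)) :=
    mul_le_mul_of_nonneg_left h3 hη0.le
  have h5β : β * η^2 / 2 * ‖A H - A W‖^2 ≤ β * η^2 / 2 * (opNorm A ^ 2 * (p:ℝ)^2) :=
    mul_le_mul_of_nonneg_left h5 (by positivity)
  have h4β : β * η * ((∑ i, A W i * (A W - v) i) - (∑ i, v i * (A W - v) i)) =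
      β * η * ‖A W - v‖^2 := by rw [h4]
  rw [h1, h2]
  set q1 := Matrix.trace (C * W) with hq1
  set q2 := Matrix.trace (C * H) with hq2
  set q3 := Matrix.trace (C * Wstar) with hq3
  set s1 := ∑ i, A W i * y i with hs1
  set s2 := ∑ i, A H i * y i with hs2
  set s3 := ∑ i, v i * y i with hs3
  set u1 := ∑ i, A W i * (A W - v) i with hu1
  set u2 := ∑ i, A H i * (A W - v) i with hu2
  set u3 := ∑ i, v i * (A W - v) i with hu3
  set m1 := ‖A W - v‖ ^ 2 with hm1
  set m2 := ‖A H - A W‖ ^ 2 with hm2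
  nlinarith [h3η, h5β, h4β]
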